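/- arXiv:2105.07253 — 3 statements merged into one kernel-verified Lean document; each statement's English description precedes it below -/
import Mathlib

section
/- Let B be an operator on bounded functions Q : S×A → ℝ that is a γ-contraction in the sup norm (‖BQ − BQ'‖_∞ ≤ γ‖Q−Q'‖_∞ for 0 < γ < 1). Define the iteration Q_k = Q_{k-1} + α(B Q_{k-1} − Q_{k-1}) for a learning rate 0 < α ≤ 1. Then for all k ≥ 0, ‖B Q_k − Q_k‖_∞ ≤ (αγ + 1 − α)^k ‖B Q_0 − Q_0‖_∞. -/
theorem stmt_4 {X : Type*} [Nonempty X]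
    (B : lp (fun _ : X => ℝ) ⊤ → lp (fun _ : X => ℝ) ⊤)
    (γ α : ℝ) (hγ0 : 0 < γ) (hγ1 : γ < 1) (hα0 : 0 < α) (hα1 : α ≤ 1)
    (hB : ∀ f g, ‖B f - B g‖ ≤ γ * ‖f - g‖)
    (Q : ℕ → lp (fun _ : X => ℝ) ⊤)
    (hQ : ∀ k, Q (k + 1) = Q k + α • (B (Q k) - Q k)) :
    ∀ k, ‖B (Q k) - Q k‖ ≤ (α * γ + 1 - α) ^ k * ‖B (Q 0) - Q 0‖ := by
  intro k
  induction k with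
  | zero => rw [pow_zero, one_mul]
  | succ k ih =>
    have hd : Q (k+1) - Q k = α • (B (Q k) - Q k) := by rw [hQ]; abel
    have h1 : ‖B (Q (k+1)) - B (Q k)‖ ≤ γ * (α * ‖B (Q k) - Q k‖) := by
      calc ‖B (Q (k+1)) - B (Q k)‖ ≤ γ * ‖Q (k+1) - Q k‖ := hB _ _
        _ = γ * (α * ‖B (Q k) - Q k‖) := by
            rw [hd, norm_smul, Real.norm_of_nonneg hα0.le]
    have heq : B (Q (k+1)) - Q (k+1)
        = (B (Q (k+1)) - B (Q k)) + (1 - α) • (B (Q k) - Q k) := by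
      rw [hQ]; module
    have h2 : ‖B (Q (k+1)) - Q (k+1)‖
        ≤ γ * (α * ‖B (Q k) - Q k‖) + (1 - α) * ‖B (Q k) - Q k‖ := by
      rw [heq]
      refine (norm_add_le _ _).trans (add_le_add h1 ?_)
      rw [norm_smul, Real.norm_of_nonneg (by linarith)]
    have hc : (0:ℝ) ≤ α * γ + 1 - α := by nlinarith
    calc ‖B (Q (k+1)) - Q (k+1)‖
        ≤ (α * γ + 1 - α) * ‖B (Q k) - Q k‖ := by linarith [h2]
      _ ≤ (α * γ + 1 - α) * ((α * γ + 1 - α) ^ k * ‖B (Q 0) - Q 0‖) := by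
          exact mul_le_mul_of_nonneg_left ih hc
      _ = (α * γ + 1 - α) ^ (k+1) * ‖B (Q 0) - Q 0‖ := by ring
end

section
/- Under the same setting (B a γ-contraction in sup norm, Q_k = Q_{k-1} + α(B Q_{k-1} − Q_{k-1})), for all k ≥ 1: ‖B Q_{k-1} − Q_k‖_∞ ≤ (1−α)(αγ + 1 − α)^{k−1} ‖B Q_0 − Q_0‖_∞. -/
theorem stmt_5 {X : Type*} [Nonempty X]
    (B : lp (fun _ : X => ℝ) ⊤ → lp (fun _ : X => ℝ) ⊤)
    (γ α : ℝ) (hγ0 : 0 < γ) (hγ1 : γ < 1) (hα0 : 0 < α) (hα1 : α ≤ 1)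
    (hB : ∀ f g, ‖B f - B g‖ ≤ γ * ‖f - g‖)
    (Q : ℕ → lp (fun _ : X => ℝ) ⊤)
    (hQ : ∀ k, Q (k + 1) = Q k + α • (B (Q k) - Q k)) :
    ∀ k, ‖B (Q k) - Q (k + 1)‖ ≤ (1 - α) * (α * γ + 1 - α) ^ k * ‖B (Q 0) - Q 0‖ := by
  have hkey : ∀ k, B (Q k) - Q (k + 1) = (1 - α) • (B (Q k) - Q k) := by
    intro k
    rw [hQ k]
    module
  have hD : ∀ k, ‖B (Q k) - Q k‖ ≤ (α * γ + 1 - α) ^ k * ‖B (Q 0) - Q 0‖ := by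
    intro k
    induction k with
    | zero => rw [pow_zero, one_mul]
    | succ k ih =>
      have hdiff : Q (k + 1) - Q k = α • (B (Q k) - Q k) := by rw [hQ k]; abel
      have h1 : B (Q (k + 1)) - Q (k + 1)
          = (B (Q (k + 1)) - B (Q k)) + (1 - α) • (B (Q k) - Q k) := by
        rw [← hkey k]; abel
      calc ‖B (Q (k + 1)) - Q (k + 1)‖
          ≤ ‖B (Q (k + 1)) - B (Q k)‖ + ‖(1 - α) • (B (Q k) - Q k)‖ := by
            rw [h1]; exact norm_add_le _ _
        _ ≤ γ * ‖Q (k + 1) - Q k‖ + (1 - α) * ‖B (Q k) - Q k‖ := by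
            gcongr
            · exact hB _ _
            · rw [norm_smul, Real.norm_eq_abs, abs_of_nonneg (by linarith)]
        _ = (α * γ + 1 - α) * ‖B (Q k) - Q k‖ := by
            rw [hdiff, norm_smul, Real.norm_eq_abs, abs_of_nonneg hα0.le]; ring
        _ ≤ (α * γ + 1 - α) * ((α * γ + 1 - α) ^ k * ‖B (Q 0) - Q 0‖) := by
            have : (0:ℝ) ≤ α * γ + 1 - α := by nlinarith
            exact mul_le_mul_of_nonneg_left ih this
        _ = (α * γ + 1 - α) ^ (k + 1) * ‖B (Q 0) - Q 0‖ := by ring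
  intro k
  rw [hkey k, norm_smul, Real.norm_eq_abs, abs_of_nonneg (by linarith)]
  have h1α : (0:ℝ) ≤ 1 - α := by linarith
  calc (1 - α) * ‖B (Q k) - Q k‖
      ≤ (1 - α) * ((α * γ + 1 - α) ^ k * ‖B (Q 0) - Q 0‖) :=
        mul_le_mul_of_nonneg_left (hD k) h1α
    _ = (1 - α) * (α * γ + 1 - α) ^ k * ‖B (Q 0) - Q 0‖ := by ring
end

section
/- In a finite MDP with discount factor γ ∈ (0,1), for any two policies π̃ and π: η(π̃) − η(π) = (1/(1−γ)) · E_{(s,a)∼d^{π̃}}[A^π(s,a)], where η is the expected discounted return, d^{π̃} is the discounted stationary state-action distribution of π̃, and A^π = Q^π − V^π is the advantage function of π. -/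
open scoped BigOperators

theorem stmt_8 {S A : Type*} [Fintype S] [Fintype A]
    (T : S → A → S → ℝ) (r : S → A → ℝ) (γ : ℝ) (ρ₀ : S → ℝ)
    (hγ0 : 0 < γ) (hγ1 : γ < 1)
    (hT0 : ∀ s a s', 0 ≤ T s a s') (hT1 : ∀ s a, ∑ s', T s a s' = 1)
    (hρ0 : ∀ s, 0 ≤ ρ₀ s) (hρ1 : ∑ s, ρ₀ s = 1)
    (πt π : S → A → ℝ)
    (hπt0 : ∀ s a, 0 ≤ πt s a) (hπt1 : ∀ s, ∑ a, πt s a = 1)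
    (hπ0 : ∀ s a, 0 ≤ π s a) (hπ1 : ∀ s, ∑ a, π s a = 1)
    (Vt Vp : S → ℝ) (Qt Qp : S → A → ℝ) (dt : S → ℝ)
    (hQt : ∀ s a, Qt s a = r s a + γ * ∑ s', T s a s' * Vt s')
    (hVt : ∀ s, Vt s = ∑ a, πt s a * Qt s a)
    (hQp : ∀ s a, Qp s a = r s a + γ * ∑ s', T s a s' * Vp s')
    (hVp : ∀ s, Vp s = ∑ a, π s a * Qp s a)
    (hd : ∀ s, dt s = (1 - γ) * ρ₀ s + γ * ∑ s', ∑ a', dt s' * πt s' a' * T s' a' s) :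
    (∑ s, ρ₀ s * Vt s) - (∑ s, ρ₀ s * Vp s)
      = (1 / (1 - γ)) * ∑ s, ∑ a, dt s * πt s a * (Qp s a - Vp s) := by
  have hγ : (1 - γ) ≠ 0 := by linarith
  set f : S → ℝ := fun s => Vt s - Vp s with hf
  -- Step A: inner sum identity
  have hA : ∀ s, ∑ a, πt s a * (Qp s a - Vp s)
      = f s - γ * ∑ a, πt s a * ∑ s', T s a s' * f s' := by
    intro s
    have hVts : Vt s = ∑ a, πt s a * (r s a + γ * ∑ s', T s a s' * Vt s') := by
      rw [hVt s]; exact Finset.sum_congr rfl fun a _ => by rw [hQt]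
    have hsumVp : ∑ a, πt s a * Vp s = Vp s := by
      rw [← Finset.sum_mul, hπt1 s, one_mul]
    have key : ∀ a, πt s a * (r s a + γ * ∑ s', T s a s' * Vt s')
        - πt s a * (r s a + γ * ∑ s', T s a s' * Vp s')
        = γ * (πt s a * ∑ s', T s a s' * f s') := by
      intro a
      have hsplit : ∑ s', T s a s' * f s'
          = (∑ s', T s a s' * Vt s') - ∑ s', T s a s' * Vp s' := by
        rw [← Finset.sum_sub_distrib]
        exact Finset.sum_congr rfl fun s' _ => by simp only [hf]; ring
      rw [hsplit]; ring
    have hdiff : ∑ a, γ * (πt s a * ∑ s', T s a s' * f s')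
        = (∑ a, πt s a * (r s a + γ * ∑ s', T s a s' * Vt s'))
          - ∑ a, πt s a * (r s a + γ * ∑ s', T s a s' * Vp s') := by
      rw [← Finset.sum_sub_distrib]
      exact Finset.sum_congr rfl fun a _ => (key a).symm
    have hstart : ∑ a, πt s a * (Qp s a - Vp s)
        = (∑ a, πt s a * (r s a + γ * ∑ s', T s a s' * Vp s')) - Vp s := by
      simp only [mul_sub]
      rw [Finset.sum_sub_distrib, hsumVp]
      congr 1
      exact Finset.sum_congr rfl fun a _ => by rw [hQp]
    have hgsum : γ * ∑ a, πt s a * ∑ s', T s a s' * f s'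
        = ∑ a, γ * (πt s a * ∑ s', T s a s' * f s') := Finset.mul_sum _ _ _
    simp only [hf] at hVts ⊢
    rw [hstart, hgsum, hdiff, hVts]
    ring
  -- Step B
  have hB : ∑ s, dt s * f s
      = (1 - γ) * ((∑ s, ρ₀ s * Vt s) - (∑ s, ρ₀ s * Vp s))
        + γ * ∑ s, ∑ a, dt s * πt s a * ∑ s', T s a s' * f s' := by
    have h1 : ∀ s, dt s * f s
        = (1 - γ) * (ρ₀ s * f s)
          + γ * ∑ s', ∑ a', dt s' * πt s' a' * T s' a' s * f s := by
      intro s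
      have hY : (∑ s', ∑ a', dt s' * πt s' a' * T s' a' s) * f s
          = ∑ s', ∑ a', dt s' * πt s' a' * T s' a' s * f s := by
        rw [Finset.sum_mul]
        exact Finset.sum_congr rfl fun s' _ => Finset.sum_mul _ _ _
      rw [hd s, ← hY]; ring
    calc ∑ s, dt s * f s
        = ∑ s, ((1 - γ) * (ρ₀ s * f s)
            + γ * ∑ s', ∑ a', dt s' * πt s' a' * T s' a' s * f s) :=
          Finset.sum_congr rfl fun s _ => h1 s
      _ = (1 - γ) * (∑ s, ρ₀ s * f s)
            + γ * ∑ s, ∑ s', ∑ a', dt s' * πt s' a' * T s' a' s * f s := by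
          rw [Finset.sum_add_distrib, ← Finset.mul_sum, ← Finset.mul_sum]
      _ = (1 - γ) * ((∑ s, ρ₀ s * Vt s) - (∑ s, ρ₀ s * Vp s))
            + γ * ∑ s, ∑ a, dt s * πt s a * ∑ s', T s a s' * f s' := by
          congr 1
          · congr 1
            rw [← Finset.sum_sub_distrib]
            exact Finset.sum_congr rfl fun s _ => by simp only [hf]; ring
          · congr 1
            rw [Finset.sum_comm]
            refine Finset.sum_congr rfl fun s' _ => ?_
            rw [Finset.sum_comm]
            refine Finset.sum_congr rfl fun a' _ => ?_
            rw [Finset.mul_sum]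
            exact Finset.sum_congr rfl fun s _ => by ring
  -- combine
  have hR : ∑ s, ∑ a, dt s * πt s a * (Qp s a - Vp s)
      = (1 - γ) * ((∑ s, ρ₀ s * Vt s) - (∑ s, ρ₀ s * Vp s)) := by
    have h0 : ∀ s, ∑ a, dt s * πt s a * (Qp s a - Vp s)
        = dt s * (f s - γ * ∑ a, πt s a * ∑ s', T s a s' * f s') := by
      intro s
      rw [← hA s, Finset.mul_sum]
      exact Finset.sum_congr rfl fun a _ => by ring
    have h2 : ∀ s, dt s * (f s - γ * ∑ a, πt s a * ∑ s', T s a s' * f s')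
        = dt s * f s - γ * ∑ a, dt s * πt s a * ∑ s', T s a s' * f s' := by
      intro s
      have : ∑ a, dt s * πt s a * ∑ s', T s a s' * f s'
          = dt s * ∑ a, πt s a * ∑ s', T s a s' * f s' := by
        rw [Finset.mul_sum]
        exact Finset.sum_congr rfl fun a _ => by ring
      rw [this]; ring
    rw [Finset.sum_congr rfl fun s _ => h0 s,
        Finset.sum_congr rfl fun s _ => h2 s,
        Finset.sum_sub_distrib, ← Finset.mul_sum, hB]
    ring
  rw [hR]
  field_simp
end
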